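/- Let R = O_S ⊕ R⁰ be a locally free sheaf of algebras on a reduced scheme S such that [R, R] ⊆ R⁰, and suppose for every geometric point s ∈ S the fiber R_s is isomorphic to the even Clifford algebra of a nonzero quadratic form on a 3-dimensional space, compatibly with the decomposition. Then the map q_R : det(R⁰) → R⁰ ⊗ R⁰ induced by the commutator Λ²R⁰ → R⁰ (via det(R⁰) ⊗ (R⁰)^∨ ≅ Λ²R⁰) is symmetric, i.e., factors through Sym²(R⁰) ⊂ R⁰ ⊗ R⁰. -/

import Mathlib

/-!
STATEMENT 11: Let `R = O_S ⊕ R⁰` be a locally free sheaf of algebras on a reduced scheme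
`S` such that `[R, R] ⊆ R⁰`, and suppose for every geometric point `s ∈ S` the fiber `R_s`
is isomorphic to the even Clifford algebra of a nonzero quadratic form on a 3-dimensional
space, compatibly with the decomposition.  Then the map `q_R : det(R⁰) → R⁰ ⊗ R⁰` induced
by the commutator `Λ²R⁰ → R⁰` (via `det(R⁰) ⊗ (R⁰)^∨ ≅ Λ²R⁰`) is symmetric, i.e. factors
through `Sym²(R⁰) ⊂ R⁰ ⊗ R⁰`.

Formalization (affine model): `S = Spec R₀` with `R₀` a reduced commutative ring, the
sheaf of algebras is an `R₀`-algebra `A` with a direct summand decomposition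
`A = R₀·1 ⊕ M` (`M` = the submodule `R⁰`, free of rank 3) containing the commutators.
A geometric point is an `R₀`-algebra structure on an algebraically closed field `K`; the
fiberwise even-Clifford condition is spelled out by the existence of a basis `w` of the
fiber of `M` and scalars `a` (not all zero) realizing the multiplication table of the even
Clifford algebra of the diagonal quadratic form `⟨a₀,a₁,a₂⟩` (in the basis indexed by the
missing index: `w_i w_j = a_k • w_k = -w_j w_i` for cyclic `(i,j,k)`, and
`w_i² = −2 a_j a_k`).
The conclusion — symmetry of `q_R(m₁∧m₂∧m₃) = Σ_cyc m_i ⊗ [m_j, m_k]` — is expressed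
equivalently as the vanishing of its image in `Λ²M`: for all `x, y, z ∈ M`,
`x ∧ [y,z] + y ∧ [z,x] + z ∧ [x,y] = 0` in the exterior algebra of `M`.
-/

open scoped TensorProduct

set_option maxHeartbeats 1000000


section Helpers

variable {R B P : Type*}

lemma pair_swap [AddCommMonoid B] [AddCommGroup P] (g : B → B → P)
    (h1 : ∀ x x' y, g (x + x') y = g x y + g x' y)
    (h2 : ∀ x y y', g x (y + y') = g x y + g x y')
    (halt : ∀ x, g x x = 0) (x y : B) : g y x = -g x y := by
  have h := halt (x + y)
  rw [h1, h2, h2, halt, halt, zero_add, add_zero] at h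
  have h' : g y x + g x y = 0 := by rw [add_comm]; exact h
  exact eq_neg_of_add_eq_zero_left h'

lemma tri_span_vanish [CommRing R] [AddCommMonoid B] [Module R B] [AddCommMonoid P] [Module R P]
    (f : B → B → B → P)
    (h1a : ∀ x x' y z, f (x + x') y z = f x y z + f x' y z)
    (h1s : ∀ (r : R) x y z, f (r • x) y z = r • f x y z)
    (h2a : ∀ x y y' z, f x (y + y') z = f x y z + f x y' z)
    (h2s : ∀ (r : R) x y z, f x (r • y) z = r • f x y z)
    (h3a : ∀ x y z z', f x y (z + z') = f x y z + f x y z')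
    (h3s : ∀ (r : R) x y z, f x y (r • z) = r • f x y z)
    (s : Set B) (h0 : ∀ x ∈ s, ∀ y ∈ s, ∀ z ∈ s, f x y z = 0) :
    ∀ x ∈ Submodule.span R s, ∀ y ∈ Submodule.span R s, ∀ z ∈ Submodule.span R s,
      f x y z = 0 := by
  have hz1 : ∀ y z, f 0 y z = 0 := by
    intro y z
    have := h1s 0 0 y z
    simpa using this
  have hz2 : ∀ x z, f x 0 z = 0 := by
    intro x z
    have := h2s 0 x 0 z
    simpa using this
  have hz3 : ∀ x y, f x y 0 = 0 := by
    intro x y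
    have := h3s 0 x y 0
    simpa using this
  have L3 : ∀ x ∈ s, ∀ y ∈ s, ∀ z ∈ Submodule.span R s, f x y z = 0 := by
    intro x hx y hy z hz
    induction hz using Submodule.span_induction with
    | mem z hzs => exact h0 x hx y hy z hzs
    | zero => exact hz3 x y
    | add z z' hz hz' ih ih' => rw [h3a, ih, ih', add_zero]
    | smul r z hz ih => rw [h3s, ih, smul_zero]
  have L2 : ∀ x ∈ s, ∀ y ∈ Submodule.span R s, ∀ z ∈ Submodule.span R s, f x y z = 0 := by
    intro x hx y hy z hz
    induction hy using Submodule.span_induction with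
    | mem y hys => exact L3 x hx y hys z hz
    | zero => exact hz2 x z
    | add y y' hy hy' ih ih' => rw [h2a, ih, ih', add_zero]
    | smul r y hy ih => rw [h2s, ih, smul_zero]
  intro x hx y hy z hz
  induction hx using Submodule.span_induction with
  | mem x hxs => exact L2 x hxs y hy z hz
  | zero => exact hz1 y z
  | add x x' hx hx' ih ih' => rw [h1a, ih, ih', add_zero]
  | smul r x hx ih => rw [h1s, ih, smul_zero]

lemma vanish_of_family [AddCommGroup P] (f : B → B → B → P) (w : Fin 3 → B)
    (alt12 : ∀ x z, f x x z = 0) (alt23 : ∀ x y, f x y y = 0)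
    (swap12 : ∀ x y z, f y x z = -f x y z)
    (swap23 : ∀ x y z, f x z y = -f x y z)
    (core : f (w 0) (w 1) (w 2) = 0) :
    ∀ i j k : Fin 3, f (w i) (w j) (w k) = 0 := by
  have alt13 : ∀ x y, f x y x = 0 := by
    intro x y
    have h := swap23 x y x
    rw [alt12] at h
    simpa using h.symm
  intro i j k
  fin_cases i <;> fin_cases j <;> fin_cases k <;>
    simp only [Fin.zero_eta, Fin.mk_one, Fin.reduceFinMk, Fin.isValue] <;>
    first
      | exact alt12 _ _
      | exact alt23 _ _
      | exact alt13 _ _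
      | exact core
      | (rw [swap12 (w 0) (w 1), core]; exact neg_zero)
      | (rw [swap23 (w 0) (w 1) (w 2), core]; exact neg_zero)
      | (rw [swap12 (w 0) (w 2) (w 1), swap23 (w 0) (w 1) (w 2), core]; simp)
      | (rw [swap12 (w 2) (w 1) (w 0), swap23 (w 2) (w 0) (w 1),
             swap12 (w 0) (w 2) (w 1), swap23 (w 0) (w 1) (w 2), core]; simp)
      | (rw [swap12 (w 1) (w 2) (w 0), swap12 (w 2) (w 1) (w 0), swap23 (w 2) (w 0) (w 1),
             swap12 (w 0) (w 2) (w 1), swap23 (w 0) (w 1) (w 2), core]; simp)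

end Helpers

lemma exterior_sym_of_basis {R N : Type*} [CommRing R] [AddCommGroup N] [Module R N]
    (Br : N → N → N)
    (h1a : ∀ u u' v, Br (u + u') v = Br u v + Br u' v)
    (h1s : ∀ (r : R) u v, Br (r • u) v = r • Br u v)
    (h2a : ∀ u v v', Br u (v + v') = Br u v + Br u v')
    (h2s : ∀ (r : R) u v, Br u (r • v) = r • Br u v)
    (hswap : ∀ u v, Br v u = -Br u v)
    (hself : ∀ u, Br u u = 0)
    (b : Module.Basis (Fin 3) R N)
    (hsym : ∀ i j : Fin 3, b.repr (Br (b (i+1)) (b (i+2))) j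
      = b.repr (Br (b (j+1)) (b (j+2))) i)
    (x y z : N) :
    ExteriorAlgebra.ι R x * ExteriorAlgebra.ι R (Br y z)
      + ExteriorAlgebra.ι R y * ExteriorAlgebra.ι R (Br z x)
      + ExteriorAlgebra.ι R z * ExteriorAlgebra.ι R (Br x y) = 0 := by
  obtain ⟨f, hfdef⟩ : ∃ f : N → N → N → ExteriorAlgebra R N, ∀ x y z, f x y z =
      ExteriorAlgebra.ι R x * ExteriorAlgebra.ι R (Br y z)
        + ExteriorAlgebra.ι R y * ExteriorAlgebra.ι R (Br z x)
        + ExteriorAlgebra.ι R z * ExteriorAlgebra.ι R (Br x y) := ⟨_, fun _ _ _ => rfl⟩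
  rw [← hfdef]
  have f1a : ∀ x x' y z, f (x + x') y z = f x y z + f x' y z := by
    intro x x' y z
    simp only [hfdef, h1a, h2a, map_add, add_mul, mul_add]
    abel
  have f1s : ∀ (r : R) x y z, f (r • x) y z = r • f x y z := by
    intro r x y z
    simp only [hfdef, h1s, h2s, map_smul, smul_mul_assoc, mul_smul_comm]
    module
  have f2a : ∀ x y y' z, f x (y + y') z = f x y z + f x y' z := by
    intro x y y' z
    simp only [hfdef, h1a, h2a, map_add, add_mul, mul_add]
    abel
  have f2s : ∀ (r : R) x y z, f x (r • y) z = r • f x y z := by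
    intro r x y z
    simp only [hfdef, h1s, h2s, map_smul, smul_mul_assoc, mul_smul_comm]
    module
  have f3a : ∀ x y z z', f x y (z + z') = f x y z + f x y z' := by
    intro x y z z'
    simp only [hfdef, h1a, h2a, map_add, add_mul, mul_add]
    abel
  have f3s : ∀ (r : R) x y z, f x y (r • z) = r • f x y z := by
    intro r x y z
    simp only [hfdef, h1s, h2s, map_smul, smul_mul_assoc, mul_smul_comm]
    module
  have falt12 : ∀ x z, f x x z = 0 := by
    intro x z
    rw [hfdef, hswap x z, hself x]
    simp only [map_neg, map_zero, mul_neg, mul_zero]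
    abel
  have falt23 : ∀ x y, f x y y = 0 := by
    intro x y
    rw [hfdef, hself y, hswap x y]
    simp only [map_neg, map_zero, mul_neg, mul_zero]
    abel
  have fswap12 : ∀ x y z, f y x z = -f x y z := fun x y z =>
    pair_swap (fun u u' => f u u' z) (fun u u' s' => f1a u u' s' z)
      (fun u s' s'' => f2a u s' s'' z) (fun u => falt12 u z) x y
  have fswap23 : ∀ x y z, f x z y = -f x y z := fun x y z =>
    pair_swap (fun u u' => f x u u') (fun u u' s' => f2a x u u' s')
      (fun u s' s'' => f3a x u s' s'') (fun u => falt23 x u) y z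
  have fcore : f (b 0) (b 1) (b 2) = 0 := by
    have e12 : Br (b 1) (b 2) = b.repr (Br (b 1) (b 2)) 0 • b 0
        + b.repr (Br (b 1) (b 2)) 1 • b 1 + b.repr (Br (b 1) (b 2)) 2 • b 2 := by
      have hh := b.sum_repr (Br (b 1) (b 2)); rw [Fin.sum_univ_three] at hh; exact hh.symm
    have e20 : Br (b 2) (b 0) = b.repr (Br (b 2) (b 0)) 0 • b 0
        + b.repr (Br (b 2) (b 0)) 1 • b 1 + b.repr (Br (b 2) (b 0)) 2 • b 2 := by
      have hh := b.sum_repr (Br (b 2) (b 0)); rw [Fin.sum_univ_three] at hh; exact hh.symm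
    have e01 : Br (b 0) (b 1) = b.repr (Br (b 0) (b 1)) 0 • b 0
        + b.repr (Br (b 0) (b 1)) 1 • b 1 + b.repr (Br (b 0) (b 1)) 2 • b 2 := by
      have hh := b.sum_repr (Br (b 0) (b 1)); rw [Fin.sum_univ_three] at hh; exact hh.symm
    have h01 : b.repr (Br (b 1) (b 2)) 1 = b.repr (Br (b 2) (b 0)) 0 := by
      simpa using hsym 0 1
    have h02 : b.repr (Br (b 1) (b 2)) 2 = b.repr (Br (b 0) (b 1)) 0 := by
      simpa using hsym 0 2
    have h12 : b.repr (Br (b 2) (b 0)) 2 = b.repr (Br (b 0) (b 1)) 1 := by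
      simpa using hsym 1 2
    have s10 : ExteriorAlgebra.ι R (b 1) * ExteriorAlgebra.ι R (b 0)
        = -(ExteriorAlgebra.ι R (b 0) * ExteriorAlgebra.ι R (b 1)) := by
      have hh := ExteriorAlgebra.ι_add_mul_swap (R := R) (b 0) (b 1)
      have hh' : ExteriorAlgebra.ι R (b 1) * ExteriorAlgebra.ι R (b 0)
          + ExteriorAlgebra.ι R (b 0) * ExteriorAlgebra.ι R (b 1) = 0 := by
        rw [add_comm]; exact hh
      exact eq_neg_of_add_eq_zero_left hh'
    have s20 : ExteriorAlgebra.ι R (b 2) * ExteriorAlgebra.ι R (b 0)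
        = -(ExteriorAlgebra.ι R (b 0) * ExteriorAlgebra.ι R (b 2)) := by
      have hh := ExteriorAlgebra.ι_add_mul_swap (R := R) (b 0) (b 2)
      have hh' : ExteriorAlgebra.ι R (b 2) * ExteriorAlgebra.ι R (b 0)
          + ExteriorAlgebra.ι R (b 0) * ExteriorAlgebra.ι R (b 2) = 0 := by
        rw [add_comm]; exact hh
      exact eq_neg_of_add_eq_zero_left hh'
    have s21 : ExteriorAlgebra.ι R (b 2) * ExteriorAlgebra.ι R (b 1)
        = -(ExteriorAlgebra.ι R (b 1) * ExteriorAlgebra.ι R (b 2)) := by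
      have hh := ExteriorAlgebra.ι_add_mul_swap (R := R) (b 1) (b 2)
      have hh' : ExteriorAlgebra.ι R (b 2) * ExteriorAlgebra.ι R (b 1)
          + ExteriorAlgebra.ι R (b 1) * ExteriorAlgebra.ι R (b 2) = 0 := by
        rw [add_comm]; exact hh
      exact eq_neg_of_add_eq_zero_left hh'
    rw [hfdef, e12, e20, e01]
    simp only [map_add, map_smul, mul_add, mul_smul_comm, ExteriorAlgebra.ι_sq_zero,
      mul_zero, smul_zero, add_zero, zero_add]
    rw [s10, s20, s21, h01, h02, h12]
    module
  refine tri_span_vanish (R := R) (B := N) (P := ExteriorAlgebra R N) f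
    f1a f1s f2a f2s f3a f3s (Set.range ⇑b) ?_ x ?_ y ?_ z ?_
  · rintro _ ⟨p', rfl⟩ _ ⟨q', rfl⟩ _ ⟨r', rfl⟩
    exact vanish_of_family f (⇑b) falt12 falt23 fswap12 fswap23 fcore p' q' r'
  · rw [b.span_eq]; trivial
  · rw [b.span_eq]; trivial
  · rw [b.span_eq]; trivial

lemma fiber_sym {K : Type*} [Field K] {B : Type*} [Ring B] [Algebra K B]
    (w : Fin 3 → B) (a : Fin 3 → K)
    (t01 : w 0 * w 1 = a 2 • w 2) (t10 : w 1 * w 0 = -(a 2 • w 2))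
    (t12 : w 1 * w 2 = a 0 • w 0) (t21 : w 2 * w 1 = -(a 0 • w 0))
    (t20 : w 2 * w 0 = a 1 • w 1) (t02 : w 0 * w 2 = -(a 1 • w 1))
    (v : Fin 3 → B)
    (hvmem : ∀ k, v k ∈ Submodule.span K (Set.range w))
    (hvli : LinearIndependent K v)
    (C : Fin 3 → Fin 3 → K)
    (hCv : ∀ k : Fin 3, v (k + 1) * v (k + 2) - v (k + 2) * v (k + 1)
      = C k 0 • v 0 + C k 1 • v 1 + C k 2 • v 2)
    (i j : Fin 3) : C i j = C j i := by
  classical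
  obtain ⟨br, hbrdef⟩ : ∃ br : B → B → B, ∀ u u', br u u' = u * u' - u' * u :=
    ⟨_, fun _ _ => rfl⟩
  have hbrself : ∀ u, br u u = 0 := fun u => by rw [hbrdef]; exact sub_self _
  have hbrswap : ∀ u u', br u' u = -br u u' := fun u u' => by
    simp only [hbrdef]; abel
  have hbr1a : ∀ u u' s, br (u + u') s = br u s + br u' s := fun u u' s => by
    simp only [hbrdef]; noncomm_ring
  have hbr1s : ∀ (k : K) u s, br (k • u) s = k • br u s := fun k u s => by
    simp only [hbrdef, smul_mul_assoc, mul_smul_comm, smul_sub]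
  have hbr2a : ∀ u s s', br u (s + s') = br u s + br u s' := fun u s s' => by
    simp only [hbrdef]; noncomm_ring
  have hbr2s : ∀ (k : K) u s, br u (k • s) = k • br u s := fun k u s => by
    simp only [hbrdef, smul_mul_assoc, mul_smul_comm, smul_sub]
  -- coordinate functionals (kept opaque to avoid unfolding blow-ups)
  obtain ⟨g, hg⟩ : ∃ g : Fin 3 → (B →ₗ[K] K), ∀ t k, g t (v k) = if k = t then 1 else 0 := by
    obtain ⟨q, hq⟩ := Submodule.exists_isCompl (Submodule.span K (Set.range v))
    set π := (Submodule.span K (Set.range v)).linearProjOfIsCompl q hq with hπ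
    set ρ : B →ₗ[K] (Fin 3 →₀ K) := hvli.repr ∘ₗ π with hρdef
    have hρ : ∀ k, ρ (v k) = Finsupp.single k 1 := by
      intro k
      have hmem : v k ∈ Submodule.span K (Set.range v) := Submodule.subset_span ⟨k, rfl⟩
      have h1 : π (v k) = ⟨v k, hmem⟩ :=
        Submodule.linearProjOfIsCompl_apply_left hq ⟨v k, hmem⟩
      rw [hρdef]
      simp only [LinearMap.coe_comp, Function.comp_apply, h1]
      exact hvli.repr_eq_single k ⟨v k, hmem⟩ rfl
    refine ⟨fun t => Finsupp.lapply t ∘ₗ ρ, ?_⟩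
    intro t k
    simp only [LinearMap.coe_comp, Function.comp_apply, hρ, Finsupp.lapply_apply,
      Finsupp.single_apply]
  have e0 : br (v 1) (v 2) = C 0 0 • v 0 + C 0 1 • v 1 + C 0 2 • v 2 := by
    rw [hbrdef]; simpa using hCv 0
  have e1 : br (v 2) (v 0) = C 1 0 • v 0 + C 1 1 • v 1 + C 1 2 • v 2 := by
    rw [hbrdef]; simpa using hCv 1
  have e2 : br (v 0) (v 1) = C 2 0 • v 0 + C 2 1 • v 1 + C 2 2 • v 2 := by
    rw [hbrdef]; simpa using hCv 2
  have hCsym : ∀ t s : Fin 3, C t s = C s t := by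
    intro t s
    have h : ((if (0 : Fin 3) = t then (1:K) else 0) *
            (C 0 0 * (if (0 : Fin 3) = s then (1:K) else 0)
              + C 0 1 * (if (1 : Fin 3) = s then (1:K) else 0)
              + C 0 2 * (if (2 : Fin 3) = s then (1:K) else 0))
          - (C 0 0 * (if (0 : Fin 3) = t then (1:K) else 0)
              + C 0 1 * (if (1 : Fin 3) = t then (1:K) else 0)
              + C 0 2 * (if (2 : Fin 3) = t then (1:K) else 0)) *
            (if (0 : Fin 3) = s then (1:K) else 0))
        + ((if (1 : Fin 3) = t then (1:K) else 0) *
            (C 1 0 * (if (0 : Fin 3) = s then (1:K) else 0)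
              + C 1 1 * (if (1 : Fin 3) = s then (1:K) else 0)
              + C 1 2 * (if (2 : Fin 3) = s then (1:K) else 0))
          - (C 1 0 * (if (0 : Fin 3) = t then (1:K) else 0)
              + C 1 1 * (if (1 : Fin 3) = t then (1:K) else 0)
              + C 1 2 * (if (2 : Fin 3) = t then (1:K) else 0)) *
            (if (1 : Fin 3) = s then (1:K) else 0))
        + ((if (2 : Fin 3) = t then (1:K) else 0) *
            (C 2 0 * (if (0 : Fin 3) = s then (1:K) else 0)
              + C 2 1 * (if (1 : Fin 3) = s then (1:K) else 0)
              + C 2 2 * (if (2 : Fin 3) = s then (1:K) else 0))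
          - (C 2 0 * (if (0 : Fin 3) = t then (1:K) else 0)
              + C 2 1 * (if (1 : Fin 3) = t then (1:K) else 0)
              + C 2 2 * (if (2 : Fin 3) = t then (1:K) else 0)) *
            (if (2 : Fin 3) = s then (1:K) else 0)) = 0 := by
      obtain ⟨f, hfdef⟩ : ∃ f : B → B → B → K, ∀ x y z, f x y z =
          (g t x * g s (br y z) - g t (br y z) * g s x)
            + (g t y * g s (br z x) - g t (br z x) * g s y)
            + (g t z * g s (br x y) - g t (br x y) * g s z) :=
        ⟨_, fun _ _ _ => rfl⟩
      have f1a : ∀ x x' y z, f (x + x') y z = f x y z + f x' y z := by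
        intro x x' y z
        simp only [hfdef, hbr1a, hbr2a, map_add]
        ring
      have f1s : ∀ (k : K) x y z, f (k • x) y z = k • f x y z := by
        intro k x y z
        simp only [hfdef, hbr1s, hbr2s, map_smul, smul_eq_mul]
        ring
      have f2a : ∀ x y y' z, f x (y + y') z = f x y z + f x y' z := by
        intro x y y' z
        simp only [hfdef, hbr1a, hbr2a, map_add]
        ring
      have f2s : ∀ (k : K) x y z, f x (k • y) z = k • f x y z := by
        intro k x y z
        simp only [hfdef, hbr1s, hbr2s, map_smul, smul_eq_mul]
        ring
      have f3a : ∀ x y z z', f x y (z + z') = f x y z + f x y z' := by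
        intro x y z z'
        simp only [hfdef, hbr1a, hbr2a, map_add]
        ring
      have f3s : ∀ (k : K) x y z, f x y (k • z) = k • f x y z := by
        intro k x y z
        simp only [hfdef, hbr1s, hbr2s, map_smul, smul_eq_mul]
        ring
      have falt12 : ∀ x z, f x x z = 0 := by
        intro x z
        simp only [hfdef]
        rw [hbrswap x z, hbrself x]
        simp only [map_neg, map_zero, mul_neg, neg_mul, mul_zero, zero_mul]
        ring
      have falt23 : ∀ x y, f x y y = 0 := by
        intro x y
        simp only [hfdef]
        rw [hbrself y, hbrswap x y]
        simp only [map_neg, map_zero, mul_neg, neg_mul, mul_zero, zero_mul]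
        ring
      have fswap12 : ∀ x y z, f y x z = -f x y z := fun x y z =>
        pair_swap (fun u u' => f u u' z) (fun u u' s' => f1a u u' s' z)
          (fun u s' s'' => f2a u s' s'' z) (fun u => falt12 u z) x y
      have fswap23 : ∀ x y z, f x z y = -f x y z := fun x y z =>
        pair_swap (fun u u' => f x u u') (fun u u' s' => f2a x u u' s')
          (fun u s' s'' => f3a x u s' s'') (fun u => falt23 x u) y z
      have fcore : f (w 0) (w 1) (w 2) = 0 := by
        have b0 : br (w 1) (w 2) = a 0 • w 0 + a 0 • w 0 := by
          rw [hbrdef, t12, t21, sub_neg_eq_add]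
        have b1 : br (w 2) (w 0) = a 1 • w 1 + a 1 • w 1 := by
          rw [hbrdef, t20, t02, sub_neg_eq_add]
        have b2 : br (w 0) (w 1) = a 2 • w 2 + a 2 • w 2 := by
          rw [hbrdef, t01, t10, sub_neg_eq_add]
        simp only [hfdef]
        rw [b0, b1, b2]
        simp only [map_add, map_smul, smul_eq_mul]
        ring
      have hf0 : f (v 0) (v 1) (v 2) = 0 := by
        refine tri_span_vanish (R := K) (B := B) (P := K) f f1a f1s f2a f2s f3a f3s
          (Set.range w) ?_ (v 0) (hvmem 0) (v 1) (hvmem 1) (v 2) (hvmem 2)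
        rintro _ ⟨p', rfl⟩ _ ⟨q', rfl⟩ _ ⟨r', rfl⟩
        exact vanish_of_family f w falt12 falt23 fswap12 fswap23 fcore p' q' r'
      rw [hfdef] at hf0
      rw [e0, e1, e2] at hf0
      simp only [map_add, map_smul, smul_eq_mul, hg] at hf0
      linear_combination hf0
    fin_cases t <;> fin_cases s <;> simp at h ⊢ <;>
      first
        | rfl
        | linear_combination h
  exact hCsym i j


theorem stmt_11.{u} (R₀ : Type u) [CommRing R₀] [IsReduced R₀]
    (A : Type u) [Ring A] [Algebra R₀ A]
    (M : Submodule R₀ A)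
    -- A = O_S ⊕ R⁰ : the unit line is a complement of M
    (hdec : IsCompl (1 : Submodule R₀ A) M)
    -- A is locally free (as is M, of rank 3)
    [Module.Free R₀ A] [Module.Finite R₀ A]
    [Module.Free R₀ ↥M] [Module.Finite R₀ ↥M]
    (hrk : Module.rank R₀ ↥M = 3)
    -- [R, R] ⊆ R⁰
    (hcomm : ∀ x y : A, x * y - y * x ∈ M)
    -- pointwise Clifford condition at every geometric point
    (hpt : ∀ (K : Type u) [Field K] [IsAlgClosed K] [Algebra R₀ K],
      ∃ a : Fin 3 → K, (∃ i, a i ≠ 0) ∧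
      ∃ w : Fin 3 → K ⊗[R₀] A,
        (∀ i, w i ∈ Submodule.span K
          {x : K ⊗[R₀] A | ∃ m ∈ M, x = (1 : K) ⊗ₜ[R₀] m}) ∧
        LinearIndependent K w ∧
        Submodule.span K (Set.range w) =
          Submodule.span K {x : K ⊗[R₀] A | ∃ m ∈ M, x = (1 : K) ⊗ₜ[R₀] m} ∧
        w 0 * w 1 = a 2 • w 2 ∧ w 1 * w 0 = -(a 2 • w 2) ∧
        w 1 * w 2 = a 0 • w 0 ∧ w 2 * w 1 = -(a 0 • w 0) ∧
        w 2 * w 0 = a 1 • w 1 ∧ w 0 * w 2 = -(a 1 • w 1) ∧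
        w 0 * w 0 = algebraMap K (K ⊗[R₀] A) (-(2 * a 1 * a 2)) ∧
        w 1 * w 1 = algebraMap K (K ⊗[R₀] A) (-(2 * a 0 * a 2)) ∧
        w 2 * w 2 = algebraMap K (K ⊗[R₀] A) (-(2 * a 0 * a 1))) :
    -- conclusion: q_R is symmetric, i.e. its image in Λ²(R⁰) vanishes
    ∀ x y z : ↥M,
      ExteriorAlgebra.ι R₀ x * ExteriorAlgebra.ι R₀
          (⟨(y : A) * z - (z : A) * y, hcomm y z⟩ : ↥M)
        + ExteriorAlgebra.ι R₀ y * ExteriorAlgebra.ι R₀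
          (⟨(z : A) * x - (x : A) * z, hcomm z x⟩ : ↥M)
        + ExteriorAlgebra.ι R₀ z * ExteriorAlgebra.ι R₀
          (⟨(x : A) * y - (y : A) * x, hcomm x y⟩ : ↥M)
        = 0 := by
    classical
  rcases subsingleton_or_nontrivial R₀ with hs | hnt
  · intro x y z
    haveI := Module.subsingleton R₀ (ExteriorAlgebra R₀ ↥M)
    exact Subsingleton.elim _ _
  intro x y z
  have hfr : Module.finrank R₀ ↥M = 3 :=
    Module.finrank_eq_of_rank_eq (by exact_mod_cast hrk)
  obtain ⟨b⟩ : Nonempty (Module.Basis (Fin 3) R₀ ↥M) := ⟨Module.finBasisOfFinrankEq R₀ ↥M hfr⟩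
  obtain ⟨Br, hBrdef⟩ : ∃ Br : ↥M → ↥M → ↥M, ∀ u v : ↥M,
      Br u v = ⟨(u : A) * v - (v : A) * u, hcomm u v⟩ := ⟨_, fun _ _ => rfl⟩
  have hBrcoe : ∀ u v : ↥M, ((Br u v : ↥M) : A) = (u : A) * v - (v : A) * u := by
    intro u v; rw [hBrdef]
  have h1a : ∀ u u' v : ↥M, Br (u + u') v = Br u v + Br u' v := by
    intro u u' v
    apply Subtype.ext
    simp only [Submodule.coe_add, hBrcoe]
    noncomm_ring
  have h1s : ∀ (r : R₀) (u v : ↥M), Br (r • u) v = r • Br u v := by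
    intro r u v
    apply Subtype.ext
    simp only [SetLike.val_smul, hBrcoe, smul_mul_assoc, mul_smul_comm, smul_sub]
  have h2a : ∀ u v v' : ↥M, Br u (v + v') = Br u v + Br u v' := by
    intro u v v'
    apply Subtype.ext
    simp only [Submodule.coe_add, hBrcoe]
    noncomm_ring
  have h2s : ∀ (r : R₀) (u v : ↥M), Br u (r • v) = r • Br u v := by
    intro r u v
    apply Subtype.ext
    simp only [SetLike.val_smul, hBrcoe, smul_mul_assoc, mul_smul_comm, smul_sub]
  have hswap : ∀ u v : ↥M, Br v u = -Br u v := by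
    intro u v
    apply Subtype.ext
    simp only [hBrcoe, Submodule.coe_neg, neg_sub]
  have hself : ∀ u : ↥M, Br u u = 0 := by
    intro u
    apply Subtype.ext
    simp only [hBrcoe, sub_self, ZeroMemClass.coe_zero]
  have hsym : ∀ i j : Fin 3, b.repr (Br (b (i+1)) (b (i+2))) j
      = b.repr (Br (b (j+1)) (b (j+2))) i := by
    intro i j
    rw [← sub_eq_zero]
    refine IsNilpotent.eq_zero ?_
    rw [nilpotent_iff_mem_prime]
    intro p hp
    haveI := hp
    letI : Algebra R₀ (AlgebraicClosure (FractionRing (R₀ ⧸ p))) :=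
      ((algebraMap (FractionRing (R₀ ⧸ p)) (AlgebraicClosure (FractionRing (R₀ ⧸ p)))).comp
        ((algebraMap (R₀ ⧸ p) (FractionRing (R₀ ⧸ p))).comp
          (Ideal.Quotient.mk p))).toAlgebra
    obtain ⟨a, -, w, -, hwli, hwspan, t01, t10, t12, t21, t20, t02, -, -, -⟩ :=
      hpt (AlgebraicClosure (FractionRing (R₀ ⧸ p)))
    obtain ⟨v, hvdef⟩ : ∃ v : Fin 3 → (AlgebraicClosure (FractionRing (R₀ ⧸ p))) ⊗[R₀] A,
        ∀ k, v k = (1 : AlgebraicClosure (FractionRing (R₀ ⧸ p))) ⊗ₜ[R₀] (b k : A) :=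
      ⟨_, fun _ => rfl⟩
    have hvmem : ∀ k, v k ∈
        Submodule.span (AlgebraicClosure (FractionRing (R₀ ⧸ p))) (Set.range w) := by
      intro k
      rw [hwspan]
      exact Submodule.subset_span ⟨(b k : A), (b k).2, hvdef k⟩
    have tmul_lin : ∀ m : ↥M,
        (1 : AlgebraicClosure (FractionRing (R₀ ⧸ p))) ⊗ₜ[R₀] (m : A)
          = algebraMap R₀ (AlgebraicClosure (FractionRing (R₀ ⧸ p))) (b.repr m 0) • v 0 + algebraMap R₀ (AlgebraicClosure (FractionRing (R₀ ⧸ p))) (b.repr m 1) • v 1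
            + algebraMap R₀ (AlgebraicClosure (FractionRing (R₀ ⧸ p))) (b.repr m 2) • v 2 := by
      intro m
      conv_lhs => rw [← b.sum_repr m]
      rw [Fin.sum_univ_three]
      simp only [Submodule.coe_add, SetLike.val_smul, TensorProduct.tmul_add,
        TensorProduct.tmul_smul, algebraMap_smul, ← hvdef]
    have hspanv : Submodule.span (AlgebraicClosure (FractionRing (R₀ ⧸ p))) (Set.range v)
        = Submodule.span (AlgebraicClosure (FractionRing (R₀ ⧸ p))) (Set.range w) := by
      apply le_antisymm
      · rw [Submodule.span_le]
        rintro _ ⟨k, rfl⟩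
        exact hvmem k
      · rw [hwspan, Submodule.span_le]
        rintro _ ⟨m, hm, rfl⟩
        rw [show m = ((⟨m, hm⟩ : ↥M) : A) from rfl, tmul_lin ⟨m, hm⟩]
        refine add_mem (add_mem ?_ ?_) ?_ <;>
          exact Submodule.smul_mem _ _ (Submodule.subset_span ⟨_, rfl⟩)
    have hvli : LinearIndependent (AlgebraicClosure (FractionRing (R₀ ⧸ p))) v := by
      rw [linearIndependent_iff_card_eq_finrank_span]
      have h1 : (Set.range w).finrank (AlgebraicClosure (FractionRing (R₀ ⧸ p))) = 3 := by
        rw [Set.finrank, finrank_span_eq_card hwli, Fintype.card_fin]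
      have h2 : (Set.range v).finrank (AlgebraicClosure (FractionRing (R₀ ⧸ p)))
          = (Set.range w).finrank (AlgebraicClosure (FractionRing (R₀ ⧸ p))) := by
        rw [Set.finrank, Set.finrank, hspanv]
      rw [h2, h1, Fintype.card_fin]
    have hCv : ∀ k : Fin 3, v (k+1) * v (k+2) - v (k+2) * v (k+1)
        = algebraMap R₀ (AlgebraicClosure (FractionRing (R₀ ⧸ p))) (b.repr (Br (b (k+1)) (b (k+2))) 0) • v 0
          + algebraMap R₀ (AlgebraicClosure (FractionRing (R₀ ⧸ p))) (b.repr (Br (b (k+1)) (b (k+2))) 1) • v 1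
          + algebraMap R₀ (AlgebraicClosure (FractionRing (R₀ ⧸ p))) (b.repr (Br (b (k+1)) (b (k+2))) 2) • v 2 := by
      intro k
      have hstep : v (k+1) * v (k+2) - v (k+2) * v (k+1)
          = (1 : AlgebraicClosure (FractionRing (R₀ ⧸ p))) ⊗ₜ[R₀]
              ((Br (b (k+1)) (b (k+2)) : ↥M) : A) := by
        rw [hvdef, hvdef]
        simp only [Algebra.TensorProduct.tmul_mul_tmul, one_mul]
        rw [← TensorProduct.tmul_sub, hBrcoe]
      rw [hstep, tmul_lin]
    have hCsymij := fiber_sym w a t01 t10 t12 t21 t20 t02 v hvmem hvli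
      (fun k l => algebraMap R₀ (AlgebraicClosure (FractionRing (R₀ ⧸ p))) (b.repr (Br (b (k+1)) (b (k+2))) l)) hCv i j
    have hzero : algebraMap R₀ (AlgebraicClosure (FractionRing (R₀ ⧸ p)))
        (b.repr (Br (b (i+1)) (b (i+2))) j - b.repr (Br (b (j+1)) (b (j+2))) i) = 0 := by
      rw [map_sub]
      rw [sub_eq_zero]
      exact hCsymij
    rw [RingHom.algebraMap_toAlgebra] at hzero
    have h3 : (algebraMap (R₀ ⧸ p) (FractionRing (R₀ ⧸ p)))
        (Ideal.Quotient.mk p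
          (b.repr (Br (b (i+1)) (b (i+2))) j - b.repr (Br (b (j+1)) (b (j+2))) i)) = 0 := by
      apply (algebraMap (FractionRing (R₀ ⧸ p))
        (AlgebraicClosure (FractionRing (R₀ ⧸ p)))).injective
      rw [map_zero]
      exact hzero
    have h4 : Ideal.Quotient.mk p
        (b.repr (Br (b (i+1)) (b (i+2))) j - b.repr (Br (b (j+1)) (b (j+2))) i) = 0 := by
      apply IsFractionRing.injective (R₀ ⧸ p) (FractionRing (R₀ ⧸ p))
      rw [map_zero]
      exact h3
    exact Ideal.Quotient.eq_zero_iff_mem.mp h4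
  have hmain := exterior_sym_of_basis Br h1a h1s h2a h2s hswap hself b hsym x y z
  simp only [hBrdef] at hmain
  exact hmain
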